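/- arXiv:0901.1200 — 3 statements merged into one kernel-verified Lean document; each statement's English description precedes it below -/
import Mathlib

section
/- Let H = ℂᵐ (a finite-dimensional complex Hilbert space), and let A₁₁, A₁₂, A₂₂ be Riccati data on H with diag{A₁₁} − A₂₂ ≫ 0, and assume A₁₁ ≥ 0 and A₂₂ ≥ 0 (no invertibility assumption on A₁₂A₁₂*). Then there exists one and only one positive-definite m×m matrix s with diag{s} − A₂₂ ≫ 0 satisfying s = A₁₁ + A₁₂(diag{s} − A₂₂)⁻¹A₁₂*; moreover s coincides with the strong limit of the even successive approximations s₀, s₂, s₄, … and with the strong limit of the odd successive approximations s₁, s₃, s₅, … -/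
open MeasureTheory ContinuousLinearMap Filter
open scoped ENNReal NNReal Topology

noncomputable section

/-- `ℓ²(H)`: the Hilbert space of square-summable sequences in `H`, indexed by `ℕ`
(index `k : ℕ` corresponds to the `(k+1)`-st entry in the paper's `1`-based indexing). -/
abbrev l2 (H : Type*) [NormedAddCommGroup H] [InnerProductSpace ℂ H] : Type _ :=
  lp (fun _ : ℕ => H) 2

variable {H : Type*} [NormedAddCommGroup H] [InnerProductSpace ℂ H]

lemma memℓp_diag (q : H →L[ℂ] H) (ξ : l2 H) : Memℓp (fun k => q (ξ k)) 2 := by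
  have h2 : (0:ℝ) < (2 : ℝ≥0∞).toReal := by norm_num
  apply memℓp_gen
  have hs : Summable (fun k => ‖q‖ ^ (2 : ℝ≥0∞).toReal * ‖ξ k‖ ^ (2 : ℝ≥0∞).toReal) :=
    ((lp.memℓp ξ).summable h2).mul_left _
  refine Summable.of_nonneg_of_le (fun k => ?_) (fun k => ?_) hs
  · positivity
  · rw [← Real.mul_rpow (norm_nonneg _) (norm_nonneg _)]
    exact Real.rpow_le_rpow (norm_nonneg _) (q.le_opNorm _) (by norm_num)

/-- `diag{q}`: the bounded block-diagonal operator on `ℓ²(H)` acting componentwise,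
`(diag{q} ξ)ₖ = q (ξₖ)`. -/
def diagOp (q : H →L[ℂ] H) : l2 H →L[ℂ] l2 H :=
  LinearMap.mkContinuous
    { toFun := fun ξ => ⟨fun k => q (ξ k), memℓp_diag q ξ⟩
      map_add' := fun ξ η => by ext k; simp [lp.coeFn_add]; rfl
      map_smul' := fun c ξ => by ext k; simp [lp.coeFn_smul] }
    ‖q‖
    (by
      intro ξ
      have h2 : (0:ℝ) < (2 : ℝ≥0∞).toReal := by norm_num
      refine lp.norm_le_of_tsum_le h2 (by positivity) ?_
      have hξ : ‖ξ‖ ^ (2 : ℝ≥0∞).toReal = ∑' k, ‖ξ k‖ ^ (2 : ℝ≥0∞).toReal :=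
        lp.norm_rpow_eq_tsum h2 ξ
      have hsum : Summable (fun k => ‖ξ k‖ ^ (2 : ℝ≥0∞).toReal) := (lp.memℓp ξ).summable h2
      calc ∑' k, ‖(fun k => q (ξ k)) k‖ ^ (2 : ℝ≥0∞).toReal
          ≤ ∑' k, ‖q‖ ^ (2 : ℝ≥0∞).toReal * ‖ξ k‖ ^ (2 : ℝ≥0∞).toReal := by
            refine Summable.tsum_le_tsum (fun k => ?_) ?_ (hsum.mul_left _)
            · rw [← Real.mul_rpow (norm_nonneg _) (norm_nonneg _)]
              exact Real.rpow_le_rpow (norm_nonneg _) (q.le_opNorm _) (by norm_num)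
            · refine Summable.of_nonneg_of_le (fun k => ?_) (fun k => ?_)
                (hsum.mul_left (‖q‖ ^ (2 : ℝ≥0∞).toReal))
              · positivity
              · rw [← Real.mul_rpow (norm_nonneg _) (norm_nonneg _)]
                exact Real.rpow_le_rpow (norm_nonneg _) (q.le_opNorm _) (by norm_num)
        _ = (‖q‖ * ‖ξ‖) ^ (2 : ℝ≥0∞).toReal := by
            rw [tsum_mul_left, ← hξ, Real.mul_rpow (norm_nonneg _) (norm_nonneg _)])

@[simp] lemma diagOp_apply (q : H →L[ℂ] H) (ξ : l2 H) (k : ℕ) :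
    (diagOp q ξ) k = q (ξ k) := rfl

/-- An operator is *strongly positive* (written `ρ ≫ 0` in the paper) if `δ • I ≤ ρ`
(Loewner order) for some `δ > 0`.  A strongly positive operator is boundedly invertible. -/
def StronglyPositive {E : Type*} [NormedAddCommGroup E] [InnerProductSpace ℂ E]
    [CompleteSpace E] (ρ : E →L[ℂ] E) : Prop :=
  ∃ δ : ℝ, 0 < δ ∧ δ • (1 : E →L[ℂ] E) ≤ ρ

variable [CompleteSpace H]

/-- The Riccati map `ℱ(s) = A₁₁ + A₁₂ (diag{s} − A₂₂)⁻¹ A₁₂*`.  Here `Ring.inverse` is the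
genuine inverse whenever `diag{s} − A₂₂` is boundedly invertible, which is guaranteed when
`diag{s} − A₂₂ ≫ 0`. -/
def riccatiMap (A11 : H →L[ℂ] H) (A12 : l2 H →L[ℂ] H) (A22 : l2 H →L[ℂ] l2 H)
    (s : H →L[ℂ] H) : H →L[ℂ] H :=
  A11 + A12 ∘L Ring.inverse (diagOp s - A22) ∘L ContinuousLinearMap.adjoint A12

/-- The successive approximations `s₀ = A₁₁`, `s_{n+1} = ℱ(sₙ)`. -/
def riccatiSeq (A11 : H →L[ℂ] H) (A12 : l2 H →L[ℂ] H) (A22 : l2 H →L[ℂ] l2 H) :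
    ℕ → (H →L[ℂ] H)
  | 0 => A11
  | n + 1 => riccatiMap A11 A12 A22 (riccatiSeq A11 A12 A22 n)

end

set_option maxHeartbeats 1000000
set_option synthInstance.maxHeartbeats 400000
set_option linter.unusedSectionVars false
noncomputable section Aux

open ContinuousLinearMap
variable {E : Type*} [NormedAddCommGroup E] [InnerProductSpace ℂ E] [CompleteSpace E]

instance l2RealModule {H : Type*} [NormedAddCommGroup H] [InnerProductSpace ℂ H] :
    Module ℝ (l2 H) := NormedSpace.complexToReal.toModule

lemma realSmul_eq_complex {M : Type*} [AddCommGroup M] [Module ℂ M] (c : ℝ) (v : M) :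
    c • v = (c : ℂ) • v := by
  rw [← smul_one_smul ℂ c v, Complex.real_smul, mul_one]

lemma opSmul_nonneg (c : ℝ) (hc : 0 ≤ c) {a : E →L[ℂ] E} (h : 0 ≤ a) : 0 ≤ c • a := by
  rw [ContinuousLinearMap.nonneg_iff_isPositive] at h ⊢
  refine ⟨?_, fun x => ?_⟩
  · have h1 : IsSelfAdjoint a := ContinuousLinearMap.isSelfAdjoint_iff_isSymmetric.mpr h.1
    refine ContinuousLinearMap.isSelfAdjoint_iff_isSymmetric.mp ?_
    show star _ = _
    rw [star_smul, star_trivial, h1.star_eq]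
  · have h2 := h.2 x
    rw [ContinuousLinearMap.reApplyInnerSelf_apply] at h2 ⊢
    rw [ContinuousLinearMap.smul_apply, realSmul_eq_complex, inner_smul_left]
    simp only [Complex.conj_ofReal, RCLike.re_to_complex, Complex.mul_re, Complex.ofReal_re,
      Complex.ofReal_im, zero_mul, sub_zero]
    simp only [RCLike.re_to_complex] at h2
    exact mul_nonneg hc h2

lemma opSmul_le_opSmul (c : ℝ) (hc : 0 ≤ c) {a b : E →L[ℂ] E} (h : a ≤ b) : c • a ≤ c • b := by
  have h2 := opSmul_nonneg c hc (sub_nonneg.mpr h)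
  rwa [smul_sub, sub_nonneg] at h2

lemma opSmul_le_opSmul' {c d : ℝ} (h : c ≤ d) {a : E →L[ℂ] E} (ha : 0 ≤ a) : c • a ≤ d • a := by
  have h2 := opSmul_nonneg (d - c) (by linarith) ha
  rwa [sub_smul, sub_nonneg] at h2

lemma opOne_nonneg : (0 : E →L[ℂ] E) ≤ 1 :=
  (ContinuousLinearMap.nonneg_iff_isPositive _).mpr ContinuousLinearMap.isPositive_one

lemma sa_smul_one (c : ℝ) : IsSelfAdjoint (c • (1 : E →L[ℂ] E)) := by
  show star _ = _
  rw [star_smul, star_trivial, star_one]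

/-- the explicit unit `δ • 1`. -/
def smulOneUnit {δ : ℝ} (hδ : δ ≠ 0) : (E →L[ℂ] E)ˣ where
  val := δ • 1
  inv := δ⁻¹ • 1
  val_inv := by rw [smul_mul_smul_comm, one_mul, mul_inv_cancel₀ hδ, one_smul]
  inv_val := by rw [smul_mul_smul_comm, one_mul, inv_mul_cancel₀ hδ, one_smul]

lemma isUnit_smul_one {δ : ℝ} (hδ : δ ≠ 0) : IsUnit (δ • (1 : E →L[ℂ] E)) :=
  ⟨smulOneUnit hδ, rfl⟩

lemma inverse_smul_one {δ : ℝ} (hδ : δ ≠ 0) :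
    Ring.inverse (δ • (1 : E →L[ℂ] E)) = δ⁻¹ • 1 := by
  have : δ • (1 : E →L[ℂ] E) = (smulOneUnit hδ : (E →L[ℂ] E)ˣ) := rfl
  rw [this, Ring.inverse_unit]; rfl

lemma isUnit_of_spos {δ : ℝ} (hδ : 0 < δ) {r : E →L[ℂ] E} (h : δ • 1 ≤ r) : IsUnit r := by
  refine CStarAlgebra.isUnit_of_le _ h ⟨?_, isUnit_smul_one hδ.ne'⟩
  simpa using opSmul_nonneg δ hδ.le (opOne_nonneg (E := E))

lemma inverse_nonneg' {r : E →L[ℂ] E} (hu : IsUnit r) (h : 0 ≤ r) : 0 ≤ Ring.inverse r := by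
  lift r to (E →L[ℂ] E)ˣ using hu
  rw [Ring.inverse_unit]
  exact CFC.inv_nonneg_of_nonneg r h

lemma inverse_antitone' {a b : E →L[ℂ] E} (ha : 0 ≤ a) (hu : IsUnit a) (hab : a ≤ b) :
    Ring.inverse b ≤ Ring.inverse a := by
  have hub : IsUnit b := CStarAlgebra.isUnit_of_le a hab ⟨ha, hu⟩
  lift a to (E →L[ℂ] E)ˣ using hu
  lift b to (E →L[ℂ] E)ˣ using hub
  rw [Ring.inverse_unit, Ring.inverse_unit]
  exact CStarAlgebra.inv_le_inv ha hab

lemma inverse_le_of_spos {δ : ℝ} (hδ : 0 < δ) {r : E →L[ℂ] E} (h : δ • 1 ≤ r) :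
    Ring.inverse r ≤ δ⁻¹ • 1 := by
  have h0 : (0:E →L[ℂ] E) ≤ δ • 1 := by simpa using opSmul_nonneg δ hδ.le (opOne_nonneg (E := E))
  have := inverse_antitone' h0 (isUnit_smul_one hδ.ne') h
  rwa [inverse_smul_one hδ.ne'] at this

lemma inverse_sa {r : E →L[ℂ] E} (h : IsSelfAdjoint r) : IsSelfAdjoint (Ring.inverse r) := by
  show star _ = _
  rw [← Ring.inverse_star, h.star_eq]

lemma inverse_real_smul {r : E →L[ℂ] E} (hu : IsUnit r) {c : ℝ} (hc : c ≠ 0) :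
    Ring.inverse (c • r) = c⁻¹ • Ring.inverse r := by
  lift r to (E →L[ℂ] E)ˣ using hu
  have h1 : c • (r : E →L[ℂ] E) = ((smulOneUnit hc * r : (E →L[ℂ] E)ˣ) : E →L[ℂ] E) := by
    show c • (r : E →L[ℂ] E) = (c • 1 : E →L[ℂ] E) * r
    rw [smul_mul_assoc, one_mul]
  rw [h1, Ring.inverse_unit, Ring.inverse_unit]
  show ((r⁻¹ * (smulOneUnit hc)⁻¹ : (E →L[ℂ] E)ˣ) : E →L[ℂ] E) = _
  show (r⁻¹ : (E →L[ℂ] E)ˣ) * ((c⁻¹ : ℝ) • (1:E →L[ℂ] E)) = _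
  rw [mul_smul_comm, mul_one]

lemma sa_le_norm_smul_one {a : E →L[ℂ] E} (h : IsSelfAdjoint a) : a ≤ ‖a‖ • 1 := by
  simpa [Algebra.algebraMap_eq_smul_one] using h.le_algebraMap_norm_self

lemma norm_le_of_pinch {x : E →L[ℂ] E} {γ : ℝ} (hγ : 0 ≤ γ)
    (h1 : -(γ • 1) ≤ x) (h2 : x ≤ γ • 1) : ‖x‖ ≤ 3 * γ := by
  have hnn : (0 : E →L[ℂ] E) ≤ x + γ • 1 := by
    rw [← sub_nonneg] at h1
    simpa [sub_neg_eq_add] using h1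
  have hub : x + γ • 1 ≤ (2 * γ) • 1 := by
    have : γ • (1 : E →L[ℂ] E) + γ • 1 = (2 * γ) • 1 := by
      rw [← add_smul]; ring_nf
    calc x + γ • 1 ≤ γ • 1 + γ • 1 := by
          rw [← sub_nonneg] at h2 ⊢
          simpa [add_sub_add_right_eq_sub] using h2
      _ = (2 * γ) • 1 := this
  have hn1 : ‖x + γ • (1:E →L[ℂ] E)‖ ≤ ‖(2 * γ) • (1:E →L[ℂ] E)‖ :=
    CStarAlgebra.norm_le_norm_of_nonneg_of_le hnn hub
  have hid : ‖(1 : E →L[ℂ] E)‖ ≤ 1 := ContinuousLinearMap.norm_id_le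
  have h2γ : ‖(2 * γ) • (1:E →L[ℂ] E)‖ ≤ 2 * γ := by
    rw [norm_smul]
    calc ‖(2*γ:ℝ)‖ * ‖(1:E →L[ℂ] E)‖ ≤ (2*γ) * 1 := by
          apply mul_le_mul _ hid (norm_nonneg _) (by linarith)
          simp [abs_of_nonneg, hγ, abs_mul]
      _ = 2 * γ := by ring
  have hγ1 : ‖γ • (1:E →L[ℂ] E)‖ ≤ γ := by
    rw [norm_smul]
    calc ‖γ‖ * ‖(1:E →L[ℂ] E)‖ ≤ γ * 1 := by
          apply mul_le_mul _ hid (norm_nonneg _) hγ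
          simp [abs_of_nonneg hγ]
      _ = γ := by ring
  calc ‖x‖ = ‖x + γ • 1 - γ • (1:E →L[ℂ] E)‖ := by rw [add_sub_cancel_right]
    _ ≤ ‖x + γ • (1:E →L[ℂ] E)‖ + ‖γ • (1:E →L[ℂ] E)‖ := norm_sub_le _ _
    _ ≤ 2 * γ + γ := add_le_add (hn1.trans h2γ) hγ1
    _ = 3 * γ := by ring

lemma nonneg_of_tendsto {f : ℕ → E →L[ℂ] E} {T : E →L[ℂ] E}
    (hf : Filter.Tendsto f Filter.atTop (nhds T)) (h : ∀ n, 0 ≤ f n) : 0 ≤ T := by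
  rw [ContinuousLinearMap.nonneg_iff_isPositive]
  have happly : ∀ x : E, Filter.Tendsto (fun n => f n x) Filter.atTop (nhds (T x)) := by
    intro x
    rw [tendsto_iff_norm_sub_tendsto_zero]
    have hb : Filter.Tendsto (fun n => ‖f n - T‖ * ‖x‖) Filter.atTop (nhds 0) := by
      have := (tendsto_iff_norm_sub_tendsto_zero.mp hf).mul_const ‖x‖
      simpa using this
    refine squeeze_zero (fun n => norm_nonneg _) (fun n => ?_) hb
    have : f n x - T x = (f n - T) x := by simp
    rw [this]
    exact ContinuousLinearMap.le_opNorm _ _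
  constructor
  · have h1 : Filter.Tendsto (fun n => star (f n)) Filter.atTop (nhds (star T)) :=
      (continuous_star.tendsto T).comp hf
    have h2 : ∀ n, star (f n) = f n := fun n =>
      (((ContinuousLinearMap.nonneg_iff_isPositive _).mp (h n)).isSelfAdjoint).star_eq
    simp only [h2] at h1
    exact ContinuousLinearMap.isSelfAdjoint_iff_isSymmetric.mp (tendsto_nhds_unique h1 hf)
  · intro x
    rw [ContinuousLinearMap.reApplyInnerSelf_apply]
    have h3 : Filter.Tendsto (fun n => RCLike.re (inner (𝕜 := ℂ) (f n x) x)) Filter.atTop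
        (nhds (RCLike.re (inner (𝕜 := ℂ) (T x) x))) :=
      (RCLike.continuous_re.tendsto _).comp (((happly x).inner tendsto_const_nhds))
    refine ge_of_tendsto h3 (Filter.Eventually.of_forall fun n => ?_)
    have := ((ContinuousLinearMap.nonneg_iff_isPositive _).mp (h n)).2 x
    rwa [ContinuousLinearMap.reApplyInnerSelf_apply] at this

lemma le_of_tendsto_bounds {x : E →L[ℂ] E} {ε : ℕ → ℝ}
    (hε : Filter.Tendsto ε Filter.atTop (nhds 0)) (h : ∀ n, x ≤ ε n • 1) : x ≤ 0 := by
  have h0 : ∀ n, (0:E →L[ℂ] E) ≤ ε n • 1 - x := fun n => sub_nonneg.mpr (h n)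
  have hlim : Filter.Tendsto (fun n => ε n • (1:E →L[ℂ] E) - x) Filter.atTop (nhds (-x)) := by
    have h1 : Filter.Tendsto (fun n => ε n • (1:E →L[ℂ] E)) Filter.atTop (nhds 0) := by
      simpa using hε.smul_const (1:E →L[ℂ] E)
    simpa using h1.sub tendsto_const_nhds
  have := nonneg_of_tendsto hlim h0
  simpa using neg_nonneg.mp (by simpa using this)

section DiagLemmas
open ContinuousLinearMap
variable {H : Type*} [NormedAddCommGroup H] [InnerProductSpace ℂ H] [CompleteSpace H]

lemma diagOp_comp (a b : H →L[ℂ] H) : diagOp (a ∘L b) = diagOp a ∘L diagOp b := by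
  ext ξ k; simp

lemma diagOp_mul (a b : H →L[ℂ] H) : diagOp (a * b) = diagOp a * diagOp b :=
  diagOp_comp a b

lemma diagOp_one : diagOp (1 : H →L[ℂ] H) = 1 := by
  ext ξ k; simp [ContinuousLinearMap.one_apply]

lemma diagOp_add (a b : H →L[ℂ] H) : diagOp (a + b) = diagOp a + diagOp b := by
  ext ξ k; simp [lp.coeFn_add]

lemma diagOp_sub (a b : H →L[ℂ] H) : diagOp (a - b) = diagOp a - diagOp b := by
  ext ξ k; simp [lp.coeFn_sub]

lemma diagOp_realSmul (c : ℝ) (a : H →L[ℂ] H) : diagOp (c • a) = c • diagOp a := by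
  ext ξ k; simp [lp.coeFn_smul]; rfl

lemma diagOp_inner (q : H →L[ℂ] H) (ξ η : l2 H) :
    inner (𝕜 := ℂ) (diagOp q ξ) η = ∑' k, inner (𝕜 := ℂ) (q (ξ k)) (η k) := by
  rw [lp.inner_eq_tsum]; rfl

lemma diagOp_adjoint (q : H →L[ℂ] H) :
    ContinuousLinearMap.adjoint (diagOp q) = diagOp (ContinuousLinearMap.adjoint q) := by
  symm
  refine (ContinuousLinearMap.eq_adjoint_iff _ _).mpr fun ξ η => ?_
  rw [diagOp_inner, lp.inner_eq_tsum]
  congr 1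
  funext k
  rw [ContinuousLinearMap.adjoint_inner_left]
  rfl

lemma diagOp_sa {q : H →L[ℂ] H} (h : IsSelfAdjoint q) : IsSelfAdjoint (diagOp q) := by
  rw [ContinuousLinearMap.isSelfAdjoint_iff'] at h ⊢
  rw [diagOp_adjoint, h]

lemma diagOp_nonneg {q : H →L[ℂ] H} (h : 0 ≤ q) : 0 ≤ diagOp q := by
  have hq : q = star (CFC.sqrt q) * CFC.sqrt q := by
    nth_rw 1 [← CFC.sqrt_mul_sqrt_self q h]
    rw [(IsSelfAdjoint.of_nonneg (CFC.sqrt_nonneg _)).star_eq]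
  rw [hq, diagOp_mul]
  have : diagOp (star (CFC.sqrt q)) = star (diagOp (CFC.sqrt q)) := by
    rw [ContinuousLinearMap.star_eq_adjoint, ContinuousLinearMap.star_eq_adjoint, diagOp_adjoint]
  rw [this]
  exact star_mul_self_nonneg _

lemma diagOp_mono {a b : H →L[ℂ] H} (h : a ≤ b) : diagOp a ≤ diagOp b := by
  have := diagOp_nonneg (sub_nonneg.mpr h)
  rw [diagOp_sub] at this
  exact sub_nonneg.mp this

lemma norm_diagOp_le (q : H →L[ℂ] H) : ‖diagOp q‖ ≤ ‖q‖ :=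
  LinearMap.mkContinuous_norm_le _ (norm_nonneg q) _

lemma diagOp_single (q : H →L[ℂ] H) (i : ℕ) (x : H) :
    diagOp q (lp.single 2 i x) = lp.single 2 i (q x) := by
  ext k
  rw [diagOp_apply]
  rcases eq_or_ne k i with rfl | hk
  · rw [lp.single_apply_self, lp.single_apply_self]
  · rw [lp.single_apply_ne _ _ _ hk, lp.single_apply_ne _ _ _ hk, map_zero]

lemma le_of_diagOp_le {a b : H →L[ℂ] H} (hsa : IsSelfAdjoint (b - a))
    (h : diagOp a ≤ diagOp b) : a ≤ b := by
  rw [ContinuousLinearMap.le_def] at h ⊢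
  refine ⟨ContinuousLinearMap.isSelfAdjoint_iff_isSymmetric.mp hsa, fun x => ?_⟩
  have h2 := h.2 (lp.single 2 0 x)
  rw [ContinuousLinearMap.reApplyInnerSelf_apply] at h2 ⊢
  have he : (diagOp b - diagOp a) (lp.single 2 0 x) = lp.single 2 0 ((b - a) x) := by
    rw [ContinuousLinearMap.sub_apply, diagOp_single, diagOp_single]
    ext k
    rcases eq_or_ne k 0 with rfl | hk
    · rw [lp.coeFn_sub, Pi.sub_apply, lp.single_apply_self, lp.single_apply_self,
        lp.single_apply_self, ContinuousLinearMap.sub_apply]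
    · rw [lp.coeFn_sub, Pi.sub_apply, lp.single_apply_ne _ _ _ hk, lp.single_apply_ne _ _ _ hk,
        lp.single_apply_ne _ _ _ hk, sub_zero]
  rw [he] at h2
  rwa [lp.inner_single_left, lp.single_apply_self] at h2

end DiagLemmas

section TendstoHelpers
open Filter ContinuousLinearMap
variable {X Y Z W : Type*} [NormedAddCommGroup X] [NormedAddCommGroup Y]
  [NormedAddCommGroup Z] [NormedAddCommGroup W]
  [NormedSpace ℂ X] [NormedSpace ℂ Y] [NormedSpace ℂ Z] [NormedSpace ℂ W]

lemma clm_tendsto_apply {f : ℕ → X →L[ℂ] Y} {T : X →L[ℂ] Y}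
    (h : Tendsto f atTop (nhds T)) (x : X) :
    Tendsto (fun n => f n x) atTop (nhds (T x)) := by
  rw [tendsto_iff_norm_sub_tendsto_zero]
  have hb : Tendsto (fun n => ‖f n - T‖ * ‖x‖) atTop (nhds 0) := by
    simpa using (tendsto_iff_norm_sub_tendsto_zero.mp h).mul_const ‖x‖
  refine squeeze_zero (fun n => norm_nonneg _) (fun n => ?_) hb
  have he : f n x - T x = (f n - T) x := by simp
  rw [he]
  exact ContinuousLinearMap.le_opNorm _ _

lemma clm_tendsto_conj (A : Y →L[ℂ] Z) (B : W →L[ℂ] X) {f : ℕ → X →L[ℂ] Y} {T : X →L[ℂ] Y}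
    (h : Tendsto f atTop (nhds T)) :
    Tendsto (fun n => A ∘L f n ∘L B) atTop (nhds (A ∘L T ∘L B)) := by
  rw [tendsto_iff_norm_sub_tendsto_zero] at h ⊢
  have hb : Tendsto (fun n => ‖A‖ * ‖f n - T‖ * ‖B‖) atTop (nhds 0) := by
    simpa using ((h.const_mul ‖A‖).mul_const ‖B‖)
  refine squeeze_zero (fun n => norm_nonneg _) (fun n => ?_) hb
  have he : A ∘L f n ∘L B - A ∘L T ∘L B = A ∘L (f n - T) ∘L B := by
    ext v; simp
  rw [he]
  calc ‖A ∘L (f n - T) ∘L B‖ ≤ ‖A‖ * ‖(f n - T) ∘L B‖ := ContinuousLinearMap.opNorm_comp_le _ _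
    _ ≤ ‖A‖ * (‖f n - T‖ * ‖B‖) := by
        apply mul_le_mul_of_nonneg_left (ContinuousLinearMap.opNorm_comp_le _ _) (norm_nonneg _)
    _ = ‖A‖ * ‖f n - T‖ * ‖B‖ := by ring

end TendstoHelpers

section MoreDiag
open Filter
variable {H : Type*} [NormedAddCommGroup H] [InnerProductSpace ℂ H] [CompleteSpace H]

lemma diagOp_tendsto {f : ℕ → H →L[ℂ] H} {T : H →L[ℂ] H}
    (h : Tendsto f atTop (nhds T)) :
    Tendsto (fun n => diagOp (f n)) atTop (nhds (diagOp T)) := by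
  rw [tendsto_iff_norm_sub_tendsto_zero] at h ⊢
  refine squeeze_zero (fun n => norm_nonneg _) (fun n => ?_) h
  rw [← diagOp_sub]
  exact norm_diagOp_le _

lemma sa_of_tendsto {E : Type*} [NormedAddCommGroup E] [InnerProductSpace ℂ E] [CompleteSpace E]
    {f : ℕ → E →L[ℂ] E} {T : E →L[ℂ] E}
    (h : Tendsto f atTop (nhds T)) (hsa : ∀ n, IsSelfAdjoint (f n)) : IsSelfAdjoint T := by
  have h1 : Tendsto (fun n => star (f n)) atTop (nhds (star T)) :=
    (continuous_star.tendsto T).comp h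
  simp only [fun n => (hsa n).star_eq] at h1
  exact tendsto_nhds_unique h1 h

end MoreDiag

section Main
open Filter ContinuousLinearMap
variable {H : Type*} [NormedAddCommGroup H] [InnerProductSpace ℂ H] [CompleteSpace H]

theorem riccati_main (A11 : H →L[ℂ] H) (A12 : l2 H →L[ℂ] H) (A22 : l2 H →L[ℂ] l2 H)
    (hA11sa : IsSelfAdjoint A11) (hA22sa : IsSelfAdjoint A22)
    (hgap : StronglyPositive (diagOp A11 - A22)) (hA22 : 0 ≤ A22) :
    ∃ s : H →L[ℂ] H,
      (IsSelfAdjoint s ∧ StronglyPositive s ∧ StronglyPositive (diagOp s - A22) ∧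
        riccatiMap A11 A12 A22 s = s) ∧
      (∀ s' : H →L[ℂ] H, IsSelfAdjoint s' ∧ StronglyPositive s' ∧
        StronglyPositive (diagOp s' - A22) ∧ riccatiMap A11 A12 A22 s' = s' → s' = s) ∧
      Filter.Tendsto (riccatiSeq A11 A12 A22) Filter.atTop (nhds s) := by
  obtain ⟨δ, hδ, hC⟩ := hgap
  set C : l2 H →L[ℂ] l2 H := diagOp A11 - A22 with hCdef
  have hone2 : (0 : l2 H →L[ℂ] l2 H) ≤ 1 := opOne_nonneg
  have hδ1 : (0 : l2 H →L[ℂ] l2 H) ≤ δ • 1 := by simpa using opSmul_nonneg δ hδ.le hone2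
  have hCnonneg : 0 ≤ C := hδ1.trans hC
  have hCsa : IsSelfAdjoint C := (diagOp_sa hA11sa).sub hA22sa
  have hCu : IsUnit C := isUnit_of_spos hδ hC
  set Φ : (l2 H →L[ℂ] l2 H) → (l2 H →L[ℂ] l2 H) :=
    fun X => diagOp (A12 ∘L X ∘L ContinuousLinearMap.adjoint A12) with hΦdef
  set Ψ : (l2 H →L[ℂ] l2 H) → (l2 H →L[ℂ] l2 H) := fun r => C + Φ (Ring.inverse r) with hΨdef
  set κ : ℝ := ‖A12 ∘L ContinuousLinearMap.adjoint A12‖ with hκdef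
  set μ : ℝ := δ⁻¹ * κ * δ⁻¹ with hμdef
  have hκ0 : 0 ≤ κ := norm_nonneg _
  have hμ0 : 0 ≤ μ := by positivity
  set c : ℝ := μ / (1 + μ) with hcdef
  have h1μ : (0:ℝ) < 1 + μ := by linarith
  have hc0 : 0 ≤ c := by positivity
  have hc1 : c < 1 := by rw [hcdef, div_lt_one h1μ]; linarith
  -- Φ basic facts
  have hΦsub : ∀ X Y, Φ (X - Y) = Φ X - Φ Y := by
    intro X Y
    rw [hΦdef]
    have he : A12 ∘L (X - Y) ∘L ContinuousLinearMap.adjoint A12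
        = A12 ∘L X ∘L ContinuousLinearMap.adjoint A12
          - A12 ∘L Y ∘L ContinuousLinearMap.adjoint A12 := by ext v; simp
    simp only [he, diagOp_sub]
  have hΦnonneg : ∀ {X}, 0 ≤ X → 0 ≤ Φ X := by
    intro X hX
    refine diagOp_nonneg ?_
    rw [ContinuousLinearMap.nonneg_iff_isPositive]
    exact ((ContinuousLinearMap.nonneg_iff_isPositive X).mp hX).conj_adjoint A12
  have hΦmono : ∀ {X Y}, X ≤ Y → Φ X ≤ Φ Y := by
    intro X Y h
    have := hΦnonneg (sub_nonneg.mpr h)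
    rw [hΦsub] at this
    exact sub_nonneg.mp this
  have hΦsmul : ∀ (t : ℝ) X, Φ (t • X) = t • Φ X := by
    intro t X
    rw [hΦdef]
    have he : A12 ∘L (t • X) ∘L ContinuousLinearMap.adjoint A12
        = t • (A12 ∘L X ∘L ContinuousLinearMap.adjoint A12) := by
        ext v; simp; exact A12.map_smul_of_tower t _
    simp only [he, diagOp_realSmul]
  have hΦsa : ∀ {X}, IsSelfAdjoint X → IsSelfAdjoint (Φ X) := by
    intro X hX
    refine diagOp_sa ?_
    rw [ContinuousLinearMap.isSelfAdjoint_iff'] at hX ⊢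
    rw [ContinuousLinearMap.adjoint_comp, ContinuousLinearMap.adjoint_comp,
      ContinuousLinearMap.adjoint_adjoint, hX, ContinuousLinearMap.comp_assoc]
  -- key bound Φ(X) ≤ μ • C for 0 ≤ X ≤ δ⁻¹ • 1
  have hΦbound : ∀ {X}, X ≤ (δ⁻¹ : ℝ) • 1 → Φ X ≤ μ • C := by
    intro X hX
    have h1 : Φ X ≤ Φ ((δ⁻¹ : ℝ) • 1) := hΦmono hX
    have h2 : Φ ((δ⁻¹ : ℝ) • 1) = (δ⁻¹ : ℝ) • Φ 1 := hΦsmul _ _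
    have h3 : Φ 1 ≤ κ • (1 : l2 H →L[ℂ] l2 H) := by
      rw [hΦdef]
      have hcomp : A12 ∘L (1 : l2 H →L[ℂ] l2 H) ∘L ContinuousLinearMap.adjoint A12
          = A12 ∘L ContinuousLinearMap.adjoint A12 := by ext v; simp
      have hsa12 : IsSelfAdjoint (A12 ∘L ContinuousLinearMap.adjoint A12) := by
        rw [ContinuousLinearMap.isSelfAdjoint_iff', ContinuousLinearMap.adjoint_comp,
          ContinuousLinearMap.adjoint_adjoint]
      calc diagOp (A12 ∘L (1 : l2 H →L[ℂ] l2 H) ∘L ContinuousLinearMap.adjoint A12)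
          = diagOp (A12 ∘L ContinuousLinearMap.adjoint A12) := by rw [hcomp]
        _ ≤ diagOp (κ • (1 : H →L[ℂ] H)) := diagOp_mono (sa_le_norm_smul_one hsa12)
        _ = κ • (1 : l2 H →L[ℂ] l2 H) := by rw [diagOp_realSmul, diagOp_one]
    have h4 : (1 : l2 H →L[ℂ] l2 H) ≤ δ⁻¹ • C := by
      have := opSmul_le_opSmul δ⁻¹ (by positivity) hC
      rwa [smul_smul, inv_mul_cancel₀ hδ.ne', one_smul] at this
    calc Φ X ≤ (δ⁻¹ : ℝ) • Φ 1 := h2 ▸ h1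
      _ ≤ (δ⁻¹ : ℝ) • (κ • (1 : l2 H →L[ℂ] l2 H)) := opSmul_le_opSmul _ (by positivity) h3
      _ = (δ⁻¹ * κ) • (1 : l2 H →L[ℂ] l2 H) := by rw [smul_smul]
      _ ≤ (δ⁻¹ * κ) • ((δ⁻¹ : ℝ) • C) := opSmul_le_opSmul _ (by positivity) h4
      _ = μ • C := by rw [smul_smul, hμdef]
  -- good set facts
  have hGood : ∀ r : l2 H →L[ℂ] l2 H, IsSelfAdjoint r → C ≤ r →
      IsUnit r ∧ 0 ≤ Ring.inverse r ∧ Ring.inverse r ≤ (δ⁻¹ : ℝ) • 1 ∧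
        Φ (Ring.inverse r) ≤ μ • C ∧ IsSelfAdjoint (Ψ r) ∧ C ≤ Ψ r ∧ Ψ r ≤ (1 + μ) • C := by
    intro r hsa hCr
    have hδr : δ • 1 ≤ r := hC.trans hCr
    have hu : IsUnit r := isUnit_of_spos hδ hδr
    have hinv0 : 0 ≤ Ring.inverse r := inverse_nonneg' hu (hδ1.trans hδr)
    have hinvle : Ring.inverse r ≤ (δ⁻¹ : ℝ) • 1 := inverse_le_of_spos hδ hδr
    have hb : Φ (Ring.inverse r) ≤ μ • C := hΦbound hinvle
    have hsaΨ : IsSelfAdjoint (Ψ r) := hCsa.add (hΦsa (inverse_sa hsa))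
    have hCΨ : C ≤ Ψ r := le_add_of_nonneg_right (hΦnonneg hinv0)
    have hub : Ψ r ≤ (1 + μ) • C := by
      have : C + Φ (Ring.inverse r) ≤ C + μ • C := add_le_add_right hb C
      calc Ψ r ≤ C + μ • C := this
        _ = (1 + μ) • C := by rw [add_smul, one_smul]
    exact ⟨hu, hinv0, hinvle, hb, hsaΨ, hCΨ, hub⟩
  -- KEY contraction step
  have hKey : ∀ θ : ℝ, 1 ≤ θ → ∀ r t : l2 H →L[ℂ] l2 H, IsSelfAdjoint r → IsSelfAdjoint t →
      C ≤ r → C ≤ t → r ≤ θ • t → Ψ t ≤ (1 + c * (θ - 1)) • Ψ r := by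
    intro θ hθ r t hrsa htsa hCr hCt hrt
    set σ : ℝ := 1 + c * (θ - 1) with hσdef
    have hθ0 : (0:ℝ) < θ := by linarith
    have hσ1 : 1 ≤ σ := by nlinarith
    have hσθ : σ ≤ θ := by nlinarith
    obtain ⟨hur, hinv0r, hinvler, hbr, -, -, -⟩ := hGood r hrsa hCr
    obtain ⟨hut, hinv0t, -, -, -, -, -⟩ := hGood t htsa hCt
    have ha0 : (0 : l2 H →L[ℂ] l2 H) ≤ (θ⁻¹ : ℝ) • r :=
      opSmul_nonneg _ (by positivity) (hCnonneg.trans hCr)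
    have hau : IsUnit ((θ⁻¹ : ℝ) • r) := by
      have h5 := (isUnit_smul_one (E := l2 H) (δ := θ⁻¹) (by positivity)).mul hur
      rwa [smul_mul_assoc, one_mul] at h5
    have hab : (θ⁻¹ : ℝ) • r ≤ t := by
      have h5 := opSmul_le_opSmul θ⁻¹ (by positivity) hrt
      rwa [smul_smul, inv_mul_cancel₀ hθ0.ne', one_smul] at h5
    have hinvineq : Ring.inverse t ≤ θ • Ring.inverse r := by
      have h5 := inverse_antitone' ha0 hau hab
      rwa [inverse_real_smul hur (by positivity), inv_inv] at h5
    have e1 : Ψ t ≤ C + θ • Φ (Ring.inverse r) := by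
      refine add_le_add_right ?_ C
      have h5 := hΦmono hinvineq
      rwa [hΦsmul] at h5
    have hkeyscalar : (θ - σ) * μ ≤ σ - 1 := by
      have h6 : (1 - c) * μ = c := by
        rw [hcdef]; field_simp; ring
      have h7 : θ - σ = (1 - c) * (θ - 1) := by rw [hσdef]; ring
      have h8 : σ - 1 = c * (θ - 1) := by rw [hσdef]; ring
      rw [h7, h8]
      calc (1 - c) * (θ - 1) * μ = (1 - c) * μ * (θ - 1) := by ring
        _ = c * (θ - 1) := by rw [h6]
        _ ≤ c * (θ - 1) := le_refl _
    have e3 : (θ - σ) • Φ (Ring.inverse r) ≤ (σ - 1) • C := by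
      calc (θ - σ) • Φ (Ring.inverse r) ≤ (θ - σ) • (μ • C) :=
            opSmul_le_opSmul _ (by linarith) hbr
        _ = ((θ - σ) * μ) • C := by rw [smul_smul]
        _ ≤ (σ - 1) • C := opSmul_le_opSmul' hkeyscalar hCnonneg
    have e4 : C + θ • Φ (Ring.inverse r) ≤ σ • Ψ r := by
      rw [← sub_nonneg]
      have e5 : σ • Ψ r - (C + θ • Φ (Ring.inverse r))
          = (σ - 1) • C - (θ - σ) • Φ (Ring.inverse r) := by
        simp only [hΨdef]
        rw [smul_add, sub_smul, sub_smul, one_smul]; abel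
      rw [e5]
      exact sub_nonneg.mpr e3
    exact e1.trans e4
  -- the sequence
  set S : ℕ → H →L[ℂ] H := riccatiSeq A11 A12 A22 with hSdef
  set rn : ℕ → l2 H →L[ℂ] l2 H := fun n => diagOp (S n) - A22 with hrndef
  have hr0 : rn 0 = C := rfl
  have hstep : ∀ n, rn (n+1) = Ψ (rn n) := by
    intro n
    have hs1 : S (n+1) = A11 + A12 ∘L Ring.inverse (rn n) ∘L ContinuousLinearMap.adjoint A12 := rfl
    show diagOp (S (n+1)) - A22 = Ψ (rn n)
    rw [hs1, diagOp_add]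
    simp only [hΨdef, hΦdef, hCdef]
    abel
  have hInv : ∀ n, IsSelfAdjoint (rn n) ∧ C ≤ rn n := by
    intro n
    induction n with
    | zero => rw [hr0]; exact ⟨hCsa, le_refl C⟩
    | succ n ih =>
      obtain ⟨hsa, hle⟩ := ih
      obtain ⟨-, -, -, -, h1, h2, -⟩ := hGood (rn n) hsa hle
      rw [hstep n]; exact ⟨h1, h2⟩
  have hub : ∀ n, rn n ≤ (1 + μ) • C := by
    intro n
    cases n with
    | zero =>
      rw [hr0]
      calc C = (1:ℝ) • C := (one_smul _ _).symm
        _ ≤ (1+μ) • C := opSmul_le_opSmul' (by linarith) hCnonneg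
    | succ n =>
      rw [hstep n]
      exact (hGood (rn n) (hInv n).1 (hInv n).2).2.2.2.2.2.2
  set θf : ℕ → ℝ := fun n => 1 + μ * c ^ n with hθf
  have hθf1 : ∀ n, 1 ≤ θf n := by
    intro n
    have := pow_nonneg hc0 n
    simp only [hθf]
    nlinarith
  have hchain : ∀ n, rn (n+1) ≤ θf n • rn n ∧ rn n ≤ θf n • rn (n+1) := by
    intro n
    induction n with
    | zero =>
      have hθf0 : θf 0 = 1 + μ := by simp [hθf]
      constructor
      · rw [hstep 0, hr0, hθf0]
        exact (hGood C hCsa (le_refl C)).2.2.2.2.2.2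
      · have h1 : C ≤ rn 1 := (hInv 1).2
        have h2 : (1:ℝ) • rn 1 ≤ θf 0 • rn 1 :=
          opSmul_le_opSmul' (hθf1 0) (hCnonneg.trans (hInv 1).2)
        rw [one_smul] at h2
        rw [hr0]
        exact h1.trans h2
    | succ n ih =>
      obtain ⟨ih1, ih2⟩ := ih
      have hσeq : 1 + c * (θf n - 1) = θf (n+1) := by simp only [hθf]; ring
      constructor
      · have hk := hKey (θf n) (hθf1 n) (rn n) (rn (n+1)) (hInv n).1 (hInv (n+1)).1
          (hInv n).2 (hInv (n+1)).2 ih2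
        rw [← hstep n, ← hstep (n+1), hσeq] at hk
        exact hk
      · have hk := hKey (θf n) (hθf1 n) (rn (n+1)) (rn n) (hInv (n+1)).1 (hInv n).1
          (hInv (n+1)).2 (hInv n).2 ih1
        rw [← hstep n, ← hstep (n+1), hσeq] at hk
        exact hk
  have hnormsmul : (1+μ) • C ≤ ((1+μ) * ‖C‖) • 1 := by
    have := opSmul_le_opSmul (1+μ) (by linarith) (sa_le_norm_smul_one hCsa)
    rwa [smul_smul] at this
  have hrnle1 : ∀ n, rn n ≤ ((1+μ) * ‖C‖) • 1 := fun n => (hub n).trans hnormsmul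
  have hdiffbound : ∀ (a b : l2 H →L[ℂ] l2 H) (n : ℕ), a ≤ θf n • b → b ≤ ((1+μ) * ‖C‖) • 1 →
      a - b ≤ (μ * c ^ n * ((1+μ) * ‖C‖)) • 1 := by
    intro a b n h1 h2
    calc a - b ≤ θf n • b - b := sub_le_sub_right h1 b
      _ = (θf n - 1) • b := by rw [sub_smul, one_smul]
      _ = (μ * c ^ n) • b := by simp [hθf]
      _ ≤ (μ * c ^ n) • (((1+μ) * ‖C‖) • 1) := opSmul_le_opSmul _ (by positivity) h2
      _ = (μ * c ^ n * ((1+μ) * ‖C‖)) • 1 := by rw [smul_smul]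
  have hdiff : ∀ n, ‖rn (n+1) - rn n‖ ≤ (3 * (μ * ((1+μ) * ‖C‖))) * c ^ n := by
    intro n
    have hγ0 : 0 ≤ μ * c ^ n * ((1+μ) * ‖C‖) := by positivity
    have h1 : rn (n+1) - rn n ≤ (μ * c ^ n * ((1+μ) * ‖C‖)) • 1 :=
      hdiffbound _ _ n (hchain n).1 (hrnle1 n)
    have h2 : rn n - rn (n+1) ≤ (μ * c ^ n * ((1+μ) * ‖C‖)) • 1 :=
      hdiffbound _ _ n (hchain n).2 (hrnle1 (n+1))
    have h3 : -((μ * c ^ n * ((1+μ) * ‖C‖)) • (1:l2 H →L[ℂ] l2 H)) ≤ rn (n+1) - rn n := by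
      rw [neg_le]
      simpa using h2
    have h4 := norm_le_of_pinch hγ0 h3 h1
    calc ‖rn (n+1) - rn n‖ ≤ 3 * (μ * c ^ n * ((1+μ) * ‖C‖)) := h4
      _ = (3 * (μ * ((1+μ) * ‖C‖))) * c ^ n := by ring
  have hcauchy : CauchySeq rn :=
    cauchySeq_of_le_geometric c _ hc1 (fun n => by
      rw [dist_eq_norm, norm_sub_rev]; exact hdiff n)
  obtain ⟨R, hR⟩ := cauchySeq_tendsto_of_complete hcauchy
  have hRsa : IsSelfAdjoint R := sa_of_tendsto hR (fun n => (hInv n).1)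
  have hCR : C ≤ R := by
    have h0 : ∀ n, (0:l2 H →L[ℂ] l2 H) ≤ rn n - C := fun n => sub_nonneg.mpr (hInv n).2
    have hlim : Filter.Tendsto (fun n => rn n - C) Filter.atTop (nhds (R - C)) :=
      hR.sub tendsto_const_nhds
    exact sub_nonneg.mp (nonneg_of_tendsto hlim h0)
  obtain ⟨hRu, hRinv0, hRinvle, hRb, hRΨsa, hRCΨ, hRub⟩ := hGood R hRsa hCR
  have hinvtend : Filter.Tendsto (fun n => Ring.inverse (rn n)) Filter.atTop
      (nhds (Ring.inverse R)) := by
    obtain ⟨U, hU⟩ := hRu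
    have hcont := NormedRing.inverse_continuousAt U
    rw [ContinuousAt, hU] at hcont
    exact hcont.comp hR
  have hconjtend := clm_tendsto_conj A12 (ContinuousLinearMap.adjoint A12) hinvtend
  have hΨtend : Filter.Tendsto (fun n => Ψ (rn n)) Filter.atTop (nhds (Ψ R)) := by
    have h2 := diagOp_tendsto hconjtend
    have h3 : Filter.Tendsto (fun n => C + Φ (Ring.inverse (rn n))) Filter.atTop
        (nhds (C + Φ (Ring.inverse R))) := tendsto_const_nhds.add h2
    exact h3
  have hfix : Ψ R = R := by
    have h1 : Filter.Tendsto (fun n => rn (n+1)) Filter.atTop (nhds R) :=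
      hR.comp (tendsto_add_atTop_nat 1)
    have h2 : (fun n => rn (n+1)) = fun n => Ψ (rn n) := funext hstep
    rw [h2] at h1
    exact tendsto_nhds_unique hΨtend h1
  -- the solution s
  set s : H →L[ℂ] H := A11 + A12 ∘L Ring.inverse R ∘L ContinuousLinearMap.adjoint A12 with hsdef
  have hds : diagOp s - A22 = R := by
    show diagOp (A11 + A12 ∘L Ring.inverse R ∘L ContinuousLinearMap.adjoint A12) - A22 = R
    rw [diagOp_add]
    have he : diagOp A11 + diagOp (A12 ∘L Ring.inverse R ∘L ContinuousLinearMap.adjoint A12)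
        - A22 = Ψ R := by
      simp only [hΨdef, hΦdef, hCdef]; abel
    rw [he, hfix]
  have hsfix : riccatiMap A11 A12 A22 s = s := by
    show A11 + A12 ∘L Ring.inverse (diagOp s - A22) ∘L ContinuousLinearMap.adjoint A12 = s
    rw [hds]
  have hconjsa : ∀ {X : l2 H →L[ℂ] l2 H}, IsSelfAdjoint X →
      IsSelfAdjoint (A12 ∘L X ∘L ContinuousLinearMap.adjoint A12) := by
    intro X hX
    rw [ContinuousLinearMap.isSelfAdjoint_iff'] at hX ⊢
    rw [ContinuousLinearMap.adjoint_comp, ContinuousLinearMap.adjoint_comp,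
      ContinuousLinearMap.adjoint_adjoint, hX, ContinuousLinearMap.comp_assoc]
  have hconjnn : ∀ {X : l2 H →L[ℂ] l2 H}, 0 ≤ X →
      (0:H →L[ℂ] H) ≤ A12 ∘L X ∘L ContinuousLinearMap.adjoint A12 := by
    intro X hX
    rw [ContinuousLinearMap.nonneg_iff_isPositive]
    exact ((ContinuousLinearMap.nonneg_iff_isPositive X).mp hX).conj_adjoint A12
  have hssa : IsSelfAdjoint s := hA11sa.add (hconjsa (inverse_sa hRsa))
  have hA11ge : δ • 1 ≤ A11 := by
    have h1 : (δ • (1:l2 H →L[ℂ] l2 H)) ≤ diagOp A11 := hC.trans (sub_le_self _ hA22)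
    have h2 : diagOp (δ • (1:H →L[ℂ] H)) ≤ diagOp A11 := by
      rw [diagOp_realSmul, diagOp_one]; exact h1
    exact le_of_diagOp_le (hA11sa.sub (sa_smul_one δ)) h2
  have hsge : δ • 1 ≤ s := by
    refine hA11ge.trans ?_
    exact le_add_of_nonneg_right (hconjnn hRinv0)
  have hspos : StronglyPositive s := ⟨δ, hδ, hsge⟩
  have hgap2 : StronglyPositive (diagOp s - A22) := ⟨δ, hδ, by rw [hds]; exact hC.trans hCR⟩
  have hRub2 : R ≤ (1+μ) • C := hfix ▸ hRub
  -- uniqueness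
  have huniq : ∀ s' : H →L[ℂ] H, IsSelfAdjoint s' ∧ StronglyPositive s' ∧
      StronglyPositive (diagOp s' - A22) ∧ riccatiMap A11 A12 A22 s' = s' → s' = s := by
    rintro s' ⟨hs'sa, -, ⟨δ', hδ', hr'⟩, hfix'⟩
    set r' : l2 H →L[ℂ] l2 H := diagOp s' - A22 with hr'def
    have hr'sa : IsSelfAdjoint r' := (diagOp_sa hs'sa).sub hA22sa
    have hr'u : IsUnit r' := isUnit_of_spos hδ' hr'
    have h0' : (0 : l2 H →L[ℂ] l2 H) ≤ δ' • 1 := by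
      simpa using opSmul_nonneg δ' hδ'.le hone2
    have hr'inv0 : 0 ≤ Ring.inverse r' := inverse_nonneg' hr'u (h0'.trans hr')
    have hs'eq : s' = A11 + A12 ∘L Ring.inverse r' ∘L ContinuousLinearMap.adjoint A12 := by
      rw [← hfix']
      rfl
    have hΨr' : Ψ r' = r' := by
      show C + Φ (Ring.inverse r') = r'
      rw [hr'def]
      conv_rhs => rw [hs'eq]
      rw [diagOp_add]
      simp only [hΦdef, hCdef]
      abel
    have hCr' : C ≤ r' := by
      rw [← hΨr']
      exact le_add_of_nonneg_right (hΦnonneg hr'inv0)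
    have hr'ub : r' ≤ (1+μ) • C := by
      rw [← hΨr']
      exact (hGood r' hr'sa hCr').2.2.2.2.2.2
    have hRel : ∀ n, r' ≤ θf n • R ∧ R ≤ θf n • r' := by
      intro n
      induction n with
      | zero =>
        have hθf0 : θf 0 = 1 + μ := by simp [hθf]
        have hbase : ∀ a b : l2 H →L[ℂ] l2 H, C ≤ b → a ≤ (1+μ) • C → a ≤ θf 0 • b := by
          intro a b h1 h2
          refine h2.trans ?_
          rw [hθf0]
          exact opSmul_le_opSmul (1+μ) (by linarith) h1
        exact ⟨hbase r' R hCR hr'ub, hbase R r' hCr' hRub2⟩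
      | succ n ih =>
        have hσeq : 1 + c * (θf n - 1) = θf (n+1) := by simp only [hθf]; ring
        constructor
        · have hk := hKey (θf n) (hθf1 n) R r' hRsa hr'sa hCR hCr' ih.2
          rwa [hΨr', hfix, hσeq] at hk
        · have hk := hKey (θf n) (hθf1 n) r' R hr'sa hRsa hCr' hCR ih.1
          rwa [hΨr', hfix, hσeq] at hk
    have hεtend : Filter.Tendsto (fun n => μ * c ^ n * ((1+μ) * ‖C‖)) Filter.atTop (nhds 0) := by
      have h1 := tendsto_pow_atTop_nhds_zero_of_lt_one hc0 hc1
      have h2 := (h1.const_mul μ).mul_const ((1+μ) * ‖C‖)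
      simpa using h2
    have hle12 : ∀ a b : l2 H →L[ℂ] l2 H, (∀ n, a ≤ θf n • b) → b ≤ ((1+μ) * ‖C‖) • 1 →
        a ≤ b := by
      intro a b hab hbub
      have h1 : ∀ n, a - b ≤ (μ * c ^ n * ((1+μ) * ‖C‖)) • 1 := fun n =>
        hdiffbound a b n (hab n) hbub
      have h2 := le_of_tendsto_bounds hεtend h1
      exact sub_nonpos.mp h2
    have h1 := hle12 r' R (fun n => (hRel n).1) (hRub2.trans hnormsmul)
    have h2 := hle12 R r' (fun n => (hRel n).2) (hr'ub.trans hnormsmul)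
    have hrR : r' = R := le_antisymm h1 h2
    rw [hs'eq, hrR, hsdef]
  -- convergence of the sequence
  have hStend : Filter.Tendsto S Filter.atTop (nhds s) := by
    have h1 : Filter.Tendsto (fun n => S (n+1)) Filter.atTop (nhds s) := by
      have h2 : (fun n => S (n+1))
          = fun n => A11 + A12 ∘L Ring.inverse (rn n) ∘L ContinuousLinearMap.adjoint A12 := by
        funext n; rfl
      rw [h2, hsdef]
      exact tendsto_const_nhds.add hconjtend
    exact (Filter.tendsto_add_atTop_iff_nat 1).mp h1
  exact ⟨s, ⟨hssa, hspos, hgap2, hsfix⟩, huniq, hStend⟩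

end Main

end Aux
/-- **Theorem 2.5.**  For `H = ℂᵐ` (finite dimension), the existence and uniqueness of the
strongly positive (i.e. positive-definite) solution of the Riccati equation holds without any
invertibility assumption on `A₁₂A₁₂*`. -/
theorem riccati_exists_unique_positive_definite_solution_finiteDim
    (m : ℕ)
    (A11 : EuclideanSpace ℂ (Fin m) →L[ℂ] EuclideanSpace ℂ (Fin m))
    (A12 : l2 (EuclideanSpace ℂ (Fin m)) →L[ℂ] EuclideanSpace ℂ (Fin m))
    (A22 : l2 (EuclideanSpace ℂ (Fin m)) →L[ℂ] l2 (EuclideanSpace ℂ (Fin m)))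
    (hA11sa : IsSelfAdjoint A11) (hA22sa : IsSelfAdjoint A22)
    (hgap : StronglyPositive (diagOp A11 - A22))
    (hA11 : 0 ≤ A11) (hA22 : 0 ≤ A22) :
    (∃! s : EuclideanSpace ℂ (Fin m) →L[ℂ] EuclideanSpace ℂ (Fin m),
        IsSelfAdjoint s ∧ StronglyPositive s ∧
          StronglyPositive (diagOp s - A22) ∧ riccatiMap A11 A12 A22 s = s) ∧
      ∀ s : EuclideanSpace ℂ (Fin m) →L[ℂ] EuclideanSpace ℂ (Fin m),
        (IsSelfAdjoint s ∧ StronglyPositive s ∧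
          StronglyPositive (diagOp s - A22) ∧ riccatiMap A11 A12 A22 s = s) →
        (∀ x, Filter.Tendsto (fun n => riccatiSeq A11 A12 A22 (2 * n) x)
            Filter.atTop (𝓝 (s x))) ∧
        (∀ x, Filter.Tendsto (fun n => riccatiSeq A11 A12 A22 (2 * n + 1) x)
            Filter.atTop (𝓝 (s x))) := by
  obtain ⟨s, hs, huniq, hStend⟩ :=
    riccati_main A11 A12 A22 hA11sa hA22sa hgap hA22
  refine ⟨⟨s, hs, huniq⟩, ?_⟩
  intro t ht
  have hts : t = s := huniq t ht
  subst hts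
  have heven : Filter.Tendsto (fun n : ℕ => 2 * n) Filter.atTop Filter.atTop :=
    Filter.tendsto_atTop_mono (fun n => by show _root_.id n ≤ 2 * n; simp [_root_.id]; omega)
      Filter.tendsto_id
  have hodd : Filter.Tendsto (fun n : ℕ => 2 * n + 1) Filter.atTop Filter.atTop :=
    Filter.tendsto_atTop_mono (fun n => by show _root_.id n ≤ 2 * n + 1; simp [_root_.id]; omega)
      Filter.tendsto_id
  constructor
  · intro x
    exact clm_tendsto_apply (hStend.comp heven) x
  · intro x
    exact clm_tendsto_apply (hStend.comp hodd) x
end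

section
/- Let H be a complex separable Hilbert space, let y ∈ B(H) be a positive operator, let B : H → ℓ²(H) be a bounded operator, and suppose there is c < 1 with B*B ≤ c·I. If y = B* diag{y} B, then y = 0. -/
open MeasureTheory ContinuousLinearMap Filter
open scoped ENNReal NNReal Topology

/-- **The key contraction argument in Theorem 2.4.**  If `y ≥ 0`, `B*B ≤ c·I` with `c < 1`,
and `y = B* diag{y} B`, then `y = 0`. -/
theorem eq_zero_of_eq_adjoint_diag_of_contraction
    {H : Type*} [NormedAddCommGroup H] [InnerProductSpace ℂ H] [CompleteSpace H]
    [TopologicalSpace.SeparableSpace H]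
    (y : H →L[ℂ] H) (hy : 0 ≤ y)
    (B : H →L[ℂ] l2 H) (c : ℝ) (hc : c < 1)
    (hB : ContinuousLinearMap.adjoint B ∘L B ≤ c • (1 : H →L[ℂ] H))
    (hfix : y = ContinuousLinearMap.adjoint B ∘L diagOp y ∘L B) :
    y = 0 := by
  have hyP : y.IsPositive := (ContinuousLinearMap.nonneg_iff_isPositive y).mp hy
  set c' : ℝ := max c 0 with hc'def
  have hc'0 : 0 ≤ c' := le_max_right _ _
  have hc'1 : c' < 1 := max_lt hc one_pos
  -- quadratic form bound for B
  have hBx : ∀ x : H, ‖B x‖ ^ 2 ≤ c' * ‖x‖ ^ 2 := by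
    intro x
    have h1 := (ContinuousLinearMap.le_def _ _ |>.mp hB).2 x
    rw [ContinuousLinearMap.reApplyInnerSelf_apply] at h1
    have h2 : ((c • (1 : H →L[ℂ] H)) - ContinuousLinearMap.adjoint B ∘L B) x
        = (c : ℂ) • x - (ContinuousLinearMap.adjoint B) (B x) := by
      simp [ContinuousLinearMap.sub_apply]
    rw [h2] at h1
    rw [inner_sub_left, inner_smul_left, ContinuousLinearMap.adjoint_inner_left] at h1
    have h3 : RCLike.re (inner ℂ (B x) (B x) : ℂ) = ‖B x‖ ^ 2 := by
      rw [← @inner_self_eq_norm_sq ℂ]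
    have h4 : RCLike.re ((starRingEnd ℂ) (c : ℂ) * (inner ℂ x x : ℂ)) = c * ‖x‖ ^ 2 := by
      rw [← @inner_self_eq_norm_sq ℂ _ _ _ _ x]
      simp [Complex.ext_iff, inner_self_im]
    have h5 : ‖B x‖ ^ 2 ≤ c * ‖x‖ ^ 2 := by
      have := h1
      rw [map_sub, h3, h4] at this
      linarith
    refine h5.trans (mul_le_mul_of_nonneg_right (le_max_left _ _) (by positivity))
  -- iterated bound on the quadratic form of y
  have key : ∀ (n : ℕ) (x : H), RCLike.re (inner ℂ (y x) x : ℂ) ≤ c' ^ n * ‖y‖ * ‖x‖ ^ 2 := by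
    intro n
    induction n with
    | zero =>
      intro x
      calc RCLike.re (inner ℂ (y x) x : ℂ) ≤ ‖(inner ℂ (y x) x : ℂ)‖ := RCLike.re_le_norm _
        _ ≤ ‖y x‖ * ‖x‖ := norm_inner_le_norm _ _
        _ ≤ (‖y‖ * ‖x‖) * ‖x‖ :=
            mul_le_mul_of_nonneg_right (y.le_opNorm x) (norm_nonneg _)
        _ = c' ^ 0 * ‖y‖ * ‖x‖ ^ 2 := by ring
    | succ n ih =>
      intro x
      set η : l2 H := B x with hη
      have hfx : y x = (ContinuousLinearMap.adjoint B) (diagOp y η) := by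
        conv_lhs => rw [hfix]
        rfl
      have hinner : (inner ℂ (y x) x : ℂ) = inner ℂ (diagOp y η) η := by
        rw [hfx, ContinuousLinearMap.adjoint_inner_left]
      have hsum : Summable fun k => (inner ℂ ((diagOp y η) k) (η k) : ℂ) :=
        lp.summable_inner _ _
      have hts : (inner ℂ (diagOp y η) η : ℂ) = ∑' k, inner ℂ (y (η k)) (η k) := by
        rw [lp.inner_eq_tsum]; rfl
      have hre : RCLike.re (inner ℂ (y x) x : ℂ)
          = ∑' k, RCLike.re (inner ℂ (y (η k)) (η k) : ℂ) := by
        rw [hinner, hts, ← RCLike.re_tsum]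
        simpa using hsum
      have hsumre : Summable fun k => RCLike.re (inner ℂ (y (η k)) (η k) : ℂ) := by
        simpa using (RCLike.hasSum_re ℂ hsum.hasSum).summable
      have hsumnorm : Summable fun k => (‖η k‖ : ℝ) ^ 2 := by
        exact ((RCLike.hasSum_re ℂ (lp.summable_inner η η).hasSum).summable).congr
          fun k => inner_self_eq_norm_sq (𝕜 := ℂ) (η k)
      have hnormsum : ∑' k, (‖η k‖ : ℝ) ^ 2 = ‖η‖ ^ 2 := by
        have h1 : (inner ℂ η η : ℂ) = ∑' k, inner ℂ (η k) (η k) := lp.inner_eq_tsum η η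
        have h2 : RCLike.re (inner ℂ η η : ℂ) = ‖η‖ ^ 2 := by
          rw [← @inner_self_eq_norm_sq ℂ]
        rw [← h2, h1, RCLike.re_tsum _ (lp.summable_inner η η)]
        exact tsum_congr fun k => (inner_self_eq_norm_sq (𝕜 := ℂ) (η k)).symm
      calc RCLike.re (inner ℂ (y x) x : ℂ)
          = ∑' k, RCLike.re (inner ℂ (y (η k)) (η k) : ℂ) := hre
        _ ≤ ∑' k, (c' ^ n * ‖y‖) * ‖η k‖ ^ 2 := by
            refine Summable.tsum_le_tsum (fun k => ?_) hsumre (hsumnorm.mul_left _)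
            have := ih (η k)
            calc RCLike.re (inner ℂ (y (η k)) (η k) : ℂ)
                ≤ c' ^ n * ‖y‖ * ‖η k‖ ^ 2 := this
              _ = (c' ^ n * ‖y‖) * ‖η k‖ ^ 2 := by ring
        _ = (c' ^ n * ‖y‖) * ‖η‖ ^ 2 := by rw [tsum_mul_left, hnormsum]
        _ ≤ (c' ^ n * ‖y‖) * (c' * ‖x‖ ^ 2) := by
            refine mul_le_mul_of_nonneg_left (hBx x) (by positivity)
        _ = c' ^ (n + 1) * ‖y‖ * ‖x‖ ^ 2 := by ring
  -- pass to the limit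
  have hle : ∀ x : H, RCLike.re (inner ℂ (y x) x : ℂ) ≤ 0 := by
    intro x
    have htend : Tendsto (fun n => c' ^ n * ‖y‖ * ‖x‖ ^ 2) atTop (𝓝 0) := by
      have h0 : Tendsto (fun n : ℕ => c' ^ n) atTop (𝓝 0) :=
        tendsto_pow_atTop_nhds_zero_of_lt_one hc'0 hc'1
      simpa using (h0.mul_const ‖y‖).mul_const (‖x‖ ^ 2)
    exact ge_of_tendsto' htend fun n => key n x
  have hre0 : ∀ x : H, RCLike.re (inner ℂ (y x) x : ℂ) = 0 := fun x =>
    le_antisymm (hle x) (by simpa [ContinuousLinearMap.reApplyInnerSelf_apply] using hyP.2 x)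
  -- conclude ⟪y x, x⟫ = 0 using selfadjointness
  have hz : ∀ x : H, (inner ℂ (y x) x : ℂ) = 0 := by
    intro x
    have hsa : ContinuousLinearMap.adjoint y = y := hyP.isSelfAdjoint
    have hconj : (starRingEnd ℂ) (inner ℂ (y x) x : ℂ) = inner ℂ (y x) x := by
      rw [inner_conj_symm]
      conv_lhs => rw [← hsa]
      rw [ContinuousLinearMap.adjoint_inner_right]
    have him : (inner ℂ (y x) x : ℂ).im = 0 := Complex.conj_eq_iff_im.mp hconj
    have hrr : (inner ℂ (y x) x : ℂ).re = 0 := hre0 x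
    exact Complex.ext hrr him
  have := (inner_map_self_eq_zero (y : H →ₗ[ℂ] H)).mp hz
  ext x
  simpa using congrArg (fun (f : H →ₗ[ℂ] H) => f x) this
end

section
/- Let K₁ and K₂ be complex Hilbert spaces, let A₁₁ ∈ B(K₁) and A₂₂ ∈ B(K₂) be selfadjoint, let A₁₂ ∈ B(K₂,K₁), let P ∈ B(K₁) and S ∈ B(K₂) be selfadjoint, and assume S − A₂₂ ≫ 0 (hence boundedly invertible). Let M be the bounded operator on the Hilbert space direct sum K₁ ⊕ K₂ given by M(x,y) = (A₁₁x + A₁₂y, A₁₂*x + A₂₂y), and let N(x,y) = (Px, Sy). Then M ≤ N in the Loewner order if and only if A₁₁ + A₁₂(S − A₂₂)⁻¹A₁₂* ≤ P. -/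
open MeasureTheory ContinuousLinearMap Filter
open scoped ENNReal NNReal Topology

/-- **Schur-complement criterion (the equivalence (1.8) ⇔ (2.7)).**  For the selfadjoint block
operator `M = [[A₁₁, A₁₂], [A₁₂*, A₂₂]]` and the block-diagonal `N = diag{P, S}` on `K₁ ⊕ K₂`
with `S − A₂₂ ≫ 0`, one has `M ≤ N` iff `A₁₁ + A₁₂(S − A₂₂)⁻¹A₁₂* ≤ P`. -/
theorem block_le_iff_schur_complement_le
    {K₁ K₂ : Type*} [NormedAddCommGroup K₁] [InnerProductSpace ℂ K₁] [CompleteSpace K₁]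
    [NormedAddCommGroup K₂] [InnerProductSpace ℂ K₂] [CompleteSpace K₂]
    (A11 : K₁ →L[ℂ] K₁) (A12 : K₂ →L[ℂ] K₁) (A22 : K₂ →L[ℂ] K₂)
    (P : K₁ →L[ℂ] K₁) (S : K₂ →L[ℂ] K₂)
    (hA11 : IsSelfAdjoint A11) (hA22 : IsSelfAdjoint A22)
    (hP : IsSelfAdjoint P) (hS : IsSelfAdjoint S)
    (hgap : StronglyPositive (S - A22)) :
    letI e : WithLp 2 (K₁ × K₂) ≃L[ℂ] K₁ × K₂ := WithLp.prodContinuousLinearEquiv 2 ℂ K₁ K₂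
    letI fst := ContinuousLinearMap.fst ℂ K₁ K₂
    letI snd := ContinuousLinearMap.snd ℂ K₁ K₂
    letI M : WithLp 2 (K₁ × K₂) →L[ℂ] WithLp 2 (K₁ × K₂) :=
      (e.symm : K₁ × K₂ →L[ℂ] WithLp 2 (K₁ × K₂)) ∘L
        ((A11 ∘L fst + A12 ∘L snd).prod
          ((ContinuousLinearMap.adjoint A12) ∘L fst + A22 ∘L snd)) ∘L
        (e : WithLp 2 (K₁ × K₂) →L[ℂ] K₁ × K₂)
    letI N : WithLp 2 (K₁ × K₂) →L[ℂ] WithLp 2 (K₁ × K₂) :=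
      (e.symm : K₁ × K₂ →L[ℂ] WithLp 2 (K₁ × K₂)) ∘L
        ((P ∘L fst).prod (S ∘L snd)) ∘L
        (e : WithLp 2 (K₁ × K₂) →L[ℂ] K₁ × K₂)
    (M ≤ N ↔
      A11 + A12 ∘L Ring.inverse (S - A22) ∘L ContinuousLinearMap.adjoint A12 ≤ P) := by
  set e := WithLp.prodContinuousLinearEquiv 2 ℂ K₁ K₂ with he
  set M := (e.symm : K₁ × K₂ →L[ℂ] WithLp 2 (K₁ × K₂)) ∘L
      ((A11 ∘L ContinuousLinearMap.fst ℂ K₁ K₂ + A12 ∘L ContinuousLinearMap.snd ℂ K₁ K₂).prod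
        ((ContinuousLinearMap.adjoint A12) ∘L ContinuousLinearMap.fst ℂ K₁ K₂ +
          A22 ∘L ContinuousLinearMap.snd ℂ K₁ K₂)) ∘L
      (e : WithLp 2 (K₁ × K₂) →L[ℂ] K₁ × K₂) with hM
  set N := (e.symm : K₁ × K₂ →L[ℂ] WithLp 2 (K₁ × K₂)) ∘L
      ((P ∘L ContinuousLinearMap.fst ℂ K₁ K₂).prod (S ∘L ContinuousLinearMap.snd ℂ K₁ K₂)) ∘L
      (e : WithLp 2 (K₁ × K₂) →L[ℂ] K₁ × K₂) with hN
  obtain ⟨δ, hδ, hδle⟩ := hgap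
  set D := S - A22 with hDdef
  have hDsa : IsSelfAdjoint D := hS.sub hA22
  have hDsymm : ∀ u v : K₂, (inner ℂ (D u) v : ℂ) = inner ℂ u (D v) := fun u v =>
    ContinuousLinearMap.isSelfAdjoint_iff_isSymmetric.mp hDsa u v
  have hDlow : ∀ y : K₂, δ * ‖y‖ ^ 2 ≤ RCLike.re (inner ℂ (D y) y : ℂ) := by
    intro y
    have h := ((ContinuousLinearMap.le_def _ _).mp hδle).2 y
    rw [ContinuousLinearMap.reApplyInnerSelf_apply, ContinuousLinearMap.sub_apply,
      inner_sub_left, map_sub] at h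
    have hsm : RCLike.re (inner ℂ ((δ • (1 : K₂ →L[ℂ] K₂)) y) y : ℂ) = δ * ‖y‖ ^ 2 := by
      rw [ContinuousLinearMap.smul_apply, ContinuousLinearMap.one_apply,
        RCLike.real_smul_eq_coe_smul (K := ℂ), inner_smul_left,
        ← inner_self_eq_norm_sq (𝕜 := ℂ)]
      simp
    rw [hsm] at h
    linarith
  have hDpos : ∀ y : K₂, 0 ≤ RCLike.re (inner ℂ (D y) y : ℂ) := fun y =>
    le_trans (by positivity) (hDlow y)
  have hunit : IsUnit D := by
    refine ContinuousLinearMap.isUnit_of_forall_le_norm_inner_map D (c := ⟨δ, hδ.le⟩) hδ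
      fun y => ?_
    have h1 : ‖y‖ ^ 2 * δ ≤ RCLike.re (inner ℂ (D y) y : ℂ) := by
      rw [mul_comm]; exact hDlow y
    exact h1.trans ((le_abs_self _).trans (RCLike.abs_re_le_norm _))
  set Dinv := Ring.inverse D with hDinvdef
  have hDmul : ∀ u, D (Dinv u) = u := fun u => by
    have := congrArg (fun T : K₂ →L[ℂ] K₂ => T u) (Ring.mul_inverse_cancel D hunit)
    simpa [ContinuousLinearMap.mul_apply] using this
  have hDisa : IsSelfAdjoint Dinv := by
    have : star Dinv = Dinv := by
      rw [hDinvdef, ← Ring.inverse_star, hDsa.star_eq]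
    exact this
  have hDisymm : ∀ u v : K₂, (inner ℂ (Dinv u) v : ℂ) = inner ℂ u (Dinv v) := fun u v =>
    ContinuousLinearMap.isSelfAdjoint_iff_isSymmetric.mp hDisa u v
  set A21 := ContinuousLinearMap.adjoint A12 with hA21def
  set X := A12 ∘L Dinv ∘L A21 with hXdef
  have hXsa : IsSelfAdjoint X := by
    have : ContinuousLinearMap.adjoint X = X := by
      rw [hXdef, ContinuousLinearMap.adjoint_comp, ContinuousLinearMap.adjoint_comp,
        hA21def, ContinuousLinearMap.adjoint_adjoint, hDisa.adjoint_eq,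
        ContinuousLinearMap.comp_assoc]
    exact this
  -- key algebraic identity
  have key : ∀ (x : K₁) (y : K₂),
      (inner ℂ ((P - A11) x - A12 y) x : ℂ) + inner ℂ (D y - A21 x) y =
      inner ℂ ((P - A11 - X) x) x + inner ℂ (D (y - Dinv (A21 x))) (y - Dinv (A21 x)) := by
    intro x y
    set w := Dinv (A21 x) with hw
    have hDw : D w = A21 x := hDmul _
    have e1 : (inner ℂ (D y) w : ℂ) = inner ℂ (A12 y) x := by
      rw [hDsymm y w, hw, hDmul, hA21def, ContinuousLinearMap.adjoint_inner_right]
    have e2 : (inner ℂ (D w) y : ℂ) = inner ℂ (A21 x) y := by rw [hDw]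
    have e3 : (inner ℂ (D w) w : ℂ) = inner ℂ (X x) x := by
      rw [hDw, hw, hXdef]
      simp only [ContinuousLinearMap.comp_apply]
      rw [← hDisymm]
      conv_rhs => rw [← ContinuousLinearMap.adjoint_inner_right, ← hA21def]
    simp only [ContinuousLinearMap.sub_apply, inner_sub_left, inner_sub_right, map_sub]
    rw [e1, e2, e3]
    ring
  -- description of (N - M) applied to a vector, in terms of inner products
  have hNM : ∀ v : WithLp 2 (K₁ × K₂),
      (inner ℂ ((N - M) v) v : ℂ) =
        inner ℂ ((P - A11) v.fst - A12 v.snd) v.fst + inner ℂ (D v.snd - A21 v.fst) v.snd := by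
    intro v
    have h1 : ((N - M) v).fst = (P - A11) v.fst - A12 v.snd := by
      simp [hM, hN, he, ContinuousLinearMap.sub_apply]; abel
    have h2 : ((N - M) v).snd = D v.snd - A21 v.fst := by
      simp [hM, hN, he, hDdef, hA21def, ContinuousLinearMap.sub_apply]
      abel
    rw [show inner ℂ ((N - M) v) v = inner ℂ (((N - M) v)).fst (v).fst + inner ℂ (((N - M) v)).snd (v).snd from WithLp.prod_inner_apply _ _, h1, h2]
  -- selfadjointness of N - M
  have hNMsa : IsSelfAdjoint (N - M) := by
    rw [ContinuousLinearMap.isSelfAdjoint_iff_isSymmetric]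
    intro u v
    have hu1 : ((N - M) u).fst = (P - A11) u.fst - A12 u.snd := by
      simp [hM, hN, he, ContinuousLinearMap.sub_apply]; abel
    have hu2 : ((N - M) u).snd = D u.snd - A21 u.fst := by
      simp [hM, hN, he, hDdef, hA21def, ContinuousLinearMap.sub_apply]; abel
    have hv1 : ((N - M) v).fst = (P - A11) v.fst - A12 v.snd := by
      simp [hM, hN, he, ContinuousLinearMap.sub_apply]; abel
    have hv2 : ((N - M) v).snd = D v.snd - A21 v.fst := by
      simp [hM, hN, he, hDdef, hA21def, ContinuousLinearMap.sub_apply]; abel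
    have hPs : ∀ a b : K₁, (inner ℂ ((P - A11) a) b : ℂ) = inner ℂ a ((P - A11) b) := fun a b =>
      ContinuousLinearMap.isSelfAdjoint_iff_isSymmetric.mp (hP.sub hA11) a b
    show (inner ℂ ((N - M) u) v : ℂ) = inner ℂ u ((N - M) v)
    rw [show inner ℂ ((N - M) u) v = inner ℂ (((N - M) u)).fst (v).fst + inner ℂ (((N - M) u)).snd (v).snd from WithLp.prod_inner_apply _ _, show inner ℂ u ((N - M) v) = inner ℂ (u).fst (((N - M) v)).fst + inner ℂ (u).snd (((N - M) v)).snd from WithLp.prod_inner_apply _ _, hu1, hu2, hv1, hv2]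
    simp only [inner_sub_left, inner_sub_right]
    rw [hPs u.fst v.fst, hDsymm u.snd v.snd,
      hA21def, ContinuousLinearMap.adjoint_inner_left,
      ContinuousLinearMap.adjoint_inner_right]
    ring
  have hPX : P - (A11 + X) = P - A11 - X := by abel
  rw [ContinuousLinearMap.le_def, ContinuousLinearMap.le_def]
  constructor
  · rintro ⟨-, hpos⟩
    refine ⟨by rw [hPX]; exact ContinuousLinearMap.isSelfAdjoint_iff_isSymmetric.mp ((hP.sub hA11).sub hXsa), fun x => ?_⟩
    set v : WithLp 2 (K₁ × K₂) := (WithLp.equiv 2 (K₁ × K₂)).symm (x, Dinv (A21 x)) with hv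
    have hvf : v.fst = x := rfl
    have hvs : v.snd = Dinv (A21 x) := rfl
    have h := hpos v
    rw [ContinuousLinearMap.reApplyInnerSelf_apply, hNM v, hvf, hvs] at h
    have hk := key x (Dinv (A21 x))
    rw [sub_self, map_zero, inner_zero_left, add_zero] at hk
    rw [ContinuousLinearMap.reApplyInnerSelf_apply, hPX]
    rw [hk] at h
    exact h
  · rintro ⟨-, hpos⟩
    refine ⟨ContinuousLinearMap.isSelfAdjoint_iff_isSymmetric.mp hNMsa, fun v => ?_⟩
    rw [ContinuousLinearMap.reApplyInnerSelf_apply, hNM v, key v.fst v.snd, map_add]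
    have h1 : 0 ≤ RCLike.re (inner ℂ ((P - A11 - X) v.fst) v.fst : ℂ) := by
      have := hpos v.fst
      rwa [ContinuousLinearMap.reApplyInnerSelf_apply, hPX] at this
    have h2 := hDpos (v.snd - Dinv (A21 v.fst))
    positivity
end
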